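/- arXiv:2003.08679 — 5 statements merged into one kernel-verified Lean document; each statement's English description precedes it below -/
import Mathlib

section
/- Let N be odd and let A be the (N+2)×(N+2) tridiagonal antisymmetric matrix with superdiagonal entries (h_α, h_β, h_1, ..., h_{N-1}), and let C = (0, 1, 0, ..., 0) be the second standard basis covector. Then the pair (A, C) is unobservable: the rank of the observability matrix (C; CA; ...; CA^{N+1}) is strictly less than N+2. -/
open Matrix

/-- The n×n tridiagonal antisymmetric matrix with superdiagonal entries
`c 0, c 1, ..., c (n-2)`. -/
def triA (n : ℕ) (c : ℕ → ℝ) : Matrix (Fin n) (Fin n) ℝ :=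
  Matrix.of fun i j =>
    if (i : ℕ) + 1 = (j : ℕ) then c i
    else if (j : ℕ) + 1 = (i : ℕ) then -(c j) else 0

/-- The superdiagonal sequence (h_α, h_β, h_1, ..., h_{N-1}), 0-indexed. -/
def chain (hα hβ : ℝ) (h : ℕ → ℝ) : ℕ → ℝ :=
  fun k => if k = 0 then hα else if k = 1 then hβ else h (k - 1)

theorem stmt_3 (N : ℕ) (hN : Odd N) (hα hβ : ℝ) (h : ℕ → ℝ) :
    (Matrix.of fun (i j : Fin (N + 2)) =>
        Matrix.vecMul (Pi.single 1 1) ((triA (N + 2) (chain hα hβ h)) ^ (i : ℕ)) j).rank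
      < N + 2 := by
  set c : ℕ → ℝ := chain hα hβ h with hc
  set A : Matrix (Fin (N + 2)) (Fin (N + 2)) ℝ := triA (N + 2) c with hA
  set M : Matrix (Fin (N + 2)) (Fin (N + 2)) ℝ :=
    Matrix.of fun (i j : Fin (N + 2)) =>
      Matrix.vecMul (Pi.single 1 1) (A ^ (i : ℕ)) j with hM
  -- A is antisymmetric
  have hskew : Aᵀ = -A := by
    ext i j
    simp only [hA, triA, transpose_apply, of_apply, neg_apply]
    by_cases h1 : (j : ℕ) + 1 = (i : ℕ) <;> by_cases h2 : (i : ℕ) + 1 = (j : ℕ)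
    · exfalso; omega
    · simp [h1, h2]
    · simp [h1, h2]
    · simp [h1, h2]
  -- hence singular (odd dimension)
  have hdet : A.det = 0 := by
    have h1 : A.det = Aᵀ.det := (Matrix.det_transpose A).symm
    rw [hskew, Matrix.det_neg, Fintype.card_fin] at h1
    have hodd : Odd (N + 2) := by obtain ⟨k, rfl⟩ := hN; exact ⟨k + 1, by ring⟩
    rw [hodd.neg_one_pow] at h1
    linarith
  -- get a suitable kernel vector v with v 1 = 0
  obtain ⟨v, hvne, hAv, hv1⟩ :
      ∃ v : Fin (N + 2) → ℝ, v ≠ 0 ∧ A.mulVec v = 0 ∧ v 1 = 0 := by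
    by_cases hα0 : c 0 = 0
    · refine ⟨(Pi.single 0 1 : Fin (N + 2) → ℝ), ?_, ?_, ?_⟩
      · intro h0
        have := congrFun h0 0
        simp at this
      · funext i
        have : ∀ j, A i j * (Pi.single 0 1 : Fin (N + 2) → ℝ) j =
            if j = 0 then A i 0 else 0 := by
          intro j
          by_cases hj : j = 0
          · subst hj; simp
          · simp [hj]
        simp only [mulVec, dotProduct, this, Finset.sum_ite_eq', Finset.mem_univ, if_true]
        have : A i 0 = 0 := by
          simp only [hA, triA, of_apply]
          split_ifs with h1 h2 <;> simp_all
        simp [this]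
      · simp [Pi.single_apply]
    · obtain ⟨w, hwne, hw⟩ := (Matrix.exists_mulVec_eq_zero_iff).mpr hdet
      refine ⟨w, hwne, hw, ?_⟩
      have h0 := congrFun hw 0
      have hrow : ∀ j : Fin (N + 2), A 0 j = if j = 1 then c 0 else 0 := by
        intro j
        simp only [hA, triA, of_apply, Fin.ext_iff, Fin.val_zero, Fin.val_one]
        split_ifs with h1 h2 h3 <;> first | rfl | simp_all | (exfalso; omega)
      have hcw : (A.mulVec w) 0 = c 0 * w 1 := by
        simp only [mulVec, dotProduct]
        have : ∀ j, A 0 j * w j = if j = 1 then c 0 * w 1 else 0 := by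
          intro j
          rw [hrow j]
          by_cases hj : j = 1 <;> simp [hj]
        rw [Finset.sum_congr rfl fun j _ => this j]
        simp
      rw [h0] at hcw
      have hcw' : c 0 * w 1 = 0 := by simpa using hcw.symm
      exact (mul_eq_zero.mp hcw').resolve_left hα0
  -- powers of A kill v (except the zeroth, whose entry 1 vanishes)
  have hpow : ∀ k : ℕ, ((A ^ k).mulVec v) 1 = 0 := by
    intro k
    cases k with
    | zero => simpa using hv1
    | succ m =>
      have : (A ^ (m + 1)).mulVec v = (A ^ m).mulVec (A.mulVec v) := by
        rw [pow_succ, ← mulVec_mulVec]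
      rw [this, hAv, mulVec_zero]
      rfl
  -- hence M v = 0
  have hMv : M.mulVec v = 0 := by
    funext i
    have key : (M.mulVec v) i = Pi.single 1 1 ⬝ᵥ (A ^ (i : ℕ)).mulVec v := by
      rw [Matrix.dotProduct_mulVec]
      rfl
    rw [key, single_dotProduct, one_mul, hpow]
    simp
  -- conclude rank < N + 2
  have hker : v ∈ LinearMap.ker M.mulVecLin := by
    simpa [Matrix.mulVecLin_apply] using hMv
  have hnt : Nontrivial (LinearMap.ker M.mulVecLin) :=
    nontrivial_of_ne ⟨v, hker⟩ 0 (by simp [Subtype.ext_iff, hvne])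
  have hposk : 0 < Module.finrank ℝ (LinearMap.ker M.mulVecLin) :=
    Module.finrank_pos_iff.mpr hnt
  have hrn := LinearMap.finrank_range_add_finrank_ker M.mulVecLin
  rw [Module.finrank_fin_fun] at hrn
  have : M.rank = Module.finrank ℝ (LinearMap.range M.mulVecLin) := rfl
  omega
end

section
/- Let N be even, A the (N+2)×(N+2) tridiagonal antisymmetric matrix with superdiagonal (h_α, h_β, h_1, ..., h_{N-1}), and C the second standard basis covector. If all of h_α, h_β, h_1, ..., h_{N-1} are nonzero, then the observability matrix (C; CA; ...; CA^{N+1}) has full rank N+2, i.e., the pair (A, C) is observable. -/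
open Matrix Finset

lemma triA_ne_zero {n : ℕ} {c : ℕ → ℝ} {i j : Fin n} (h : triA n c i j ≠ 0) :
    (i : ℕ) + 1 = (j : ℕ) ∨ (j : ℕ) + 1 = (i : ℕ) := by
  by_contra hc
  push_neg at hc
  simp [triA, hc.1, hc.2] at h

lemma triA_left {n : ℕ} (c : ℕ → ℝ) {i j : Fin n} (h : (i : ℕ) + 1 = (j : ℕ)) :
    triA n c i j = c i := by
  simp [triA, h]

lemma triA_right {n : ℕ} (c : ℕ → ℝ) {i j : Fin n} (h : (j : ℕ) + 1 = (i : ℕ)) :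
    triA n c i j = -(c j) := by
  have : ¬ ((i : ℕ) + 1 = (j : ℕ)) := by omega
  simp [triA, this, h]

lemma pow_row_supp {N : ℕ} (c : ℕ → ℝ) (i : ℕ) :
    ∀ j : Fin (N + 2), (i + 1 < (j : ℕ) ∨ ((j : ℕ) + i) % 2 = 0) →
      (triA (N + 2) c ^ i) 1 j = 0 := by
  induction i with
  | zero =>
    intro j hj
    have : (1 : Fin (N + 2)) ≠ j := by
      intro hh
      have : ((1 : Fin (N+2)) : ℕ) = (j : ℕ) := by rw [hh]
      simp [Fin.val_one] at this
      omega
    simp [Matrix.one_apply_ne this]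
  | succ i ih =>
    intro j hj
    rw [pow_succ, Matrix.mul_apply]
    apply Finset.sum_eq_zero
    intro k _
    rcases eq_or_ne (triA (N + 2) c k j) 0 with h0 | h0
    · rw [h0, mul_zero]
    · rcases triA_ne_zero h0 with h | h
      · rw [ih k (by omega), zero_mul]
      · rw [ih k (by omega), zero_mul]

lemma pow_row_lead {N : ℕ} (c : ℕ → ℝ) (i : ℕ) (hi : i + 1 < N + 2) :
    (triA (N + 2) c ^ i) 1 ⟨i + 1, hi⟩ = ∏ t ∈ Finset.Icc 1 i, c t := by
  induction i with
  | zero =>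
    have : (⟨1, hi⟩ : Fin (N + 2)) = 1 := by
      apply Fin.ext; simp [Fin.val_one]
    rw [pow_zero, this, Matrix.one_apply_eq]
    simp
  | succ i ih =>
    rw [pow_succ, Matrix.mul_apply]
    rw [Finset.sum_eq_single (⟨i + 1, by omega⟩ : Fin (N + 2))]
    · rw [ih (by omega), triA_left c (by simp)]
      rw [Finset.prod_Icc_succ_top (by omega)]
    · intro k _ hk
      rcases eq_or_ne (triA (N + 2) c k ⟨i + 2, hi⟩) 0 with h0 | h0
      · rw [h0, mul_zero]
      · rcases triA_ne_zero h0 with h | h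
        · simp only [Fin.val_mk] at h
          exact absurd (Fin.ext (by simp; omega)) hk
        · simp only [Fin.val_mk] at h
          rw [pow_row_supp c i k (by omega), zero_mul]
    · intro hmem
      exact absurd (Finset.mem_univ _) hmem

lemma key {N : ℕ} (c : ℕ → ℝ) (hc : ∀ t, t ≤ N → c t ≠ 0) (z : Fin (N + 2) → ℝ)
    (hz : ∀ k : ℕ, 2 * k + 1 < N + 2 → ∑ j, (triA (N + 2) c ^ (2 * k)) 1 j * z j = 0) :
    ∀ j : Fin (N + 2), (j : ℕ) % 2 = 1 → z j = 0 := by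
  suffices H : ∀ m : ℕ, ∀ j : Fin (N + 2), (j : ℕ) < m → (j : ℕ) % 2 = 1 → z j = 0 by
    intro j hj; exact H (N + 2) j j.isLt hj
  intro m
  induction m with
  | zero => intro j hj _; exact absurd hj (Nat.not_lt_zero _)
  | succ m ih =>
    intro j hjm hj
    rcases Nat.lt_or_ge (j : ℕ) m with hlt | hge
    · exact ih j hlt hj
    have hjv : (j : ℕ) = m := by omega
    set k := (j : ℕ) / 2 with hk
    have hj2 : (j : ℕ) = 2 * k + 1 := by omega
    have hsum := hz k (by omega)
    rw [Finset.sum_eq_single j] at hsum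
    · have hl : (triA (N + 2) c ^ (2 * k)) 1 j = ∏ t ∈ Finset.Icc 1 (2 * k), c t := by
        have hje : j = ⟨2 * k + 1, by omega⟩ := Fin.ext (by simp [hj2])
        rw [hje, pow_row_lead]
      rw [hl] at hsum
      have hne : (∏ t ∈ Finset.Icc 1 (2 * k), c t) ≠ 0 := by
        rw [Finset.prod_ne_zero_iff]
        intro t ht
        simp only [Finset.mem_Icc] at ht
        exact hc t (by omega)
      exact (mul_eq_zero.mp hsum).resolve_left hne
    · intro j' _ hj'
      rcases Nat.lt_or_ge (2 * k + 1) (j' : ℕ) with h | h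
      · rw [pow_row_supp c _ j' (Or.inl (by omega)), zero_mul]
      by_cases hpar : ((j' : ℕ) + 2 * k) % 2 = 0
      · rw [pow_row_supp c _ j' (Or.inr hpar), zero_mul]
      · have hodd' : (j' : ℕ) % 2 = 1 := by omega
        have hne' : (j' : ℕ) ≠ (j : ℕ) := fun hh => hj' (Fin.ext hh)
        rw [ih j' (by omega) hodd', mul_zero]
    · intro hmem; exact absurd (Finset.mem_univ _) hmem

theorem stmt_4 (N : ℕ) (hN : Even N) (hα hβ : ℝ) (h : ℕ → ℝ)
    (h1 : hα ≠ 0) (h2 : hβ ≠ 0) (h3 : ∀ i, 1 ≤ i → i ≤ N - 1 → h i ≠ 0) :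
    (Matrix.of fun (i j : Fin (N + 2)) =>
        Matrix.vecMul (Pi.single 1 1) ((triA (N + 2) (chain hα hβ h)) ^ (i : ℕ)) j).rank
      = N + 2 := by
  rw [Nat.even_iff] at hN
  set c : ℕ → ℝ := chain hα hβ h with hcdef
  have hc : ∀ t, t ≤ N → c t ≠ 0 := by
    intro t ht
    match t with
    | 0 => simpa [hcdef, chain] using h1
    | 1 => simpa [hcdef, chain] using h2
    | (t + 2) => simpa [hcdef, chain] using h3 (t + 1) (by omega) (by omega)
  set A := triA (N + 2) c with hA
  set M : Matrix (Fin (N + 2)) (Fin (N + 2)) ℝ :=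
    Matrix.of fun (i j : Fin (N + 2)) =>
      Matrix.vecMul (Pi.single 1 1) (A ^ (i : ℕ)) j with hM
  have hMentry : ∀ (i j : Fin (N + 2)), M i j = (A ^ (i : ℕ)) 1 j := by
    intro i j
    rw [hM]
    simp [Matrix.single_one_vecMul]
  have hker : ∀ w : Fin (N + 2) → ℝ, M *ᵥ w = 0 → w = 0 := by
    intro w hw
    have hw' : ∀ i : ℕ, ∀ hi : i < N + 2, ∑ j, (A ^ i) 1 j * w j = 0 := by
      intro i hi
      have hcf := congrFun hw ⟨i, hi⟩
      simp only [Matrix.mulVec, dotProduct, hMentry, Fin.val_mk, Pi.zero_apply] at hcf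
      exact hcf
    have hodd : ∀ j : Fin (N + 2), (j : ℕ) % 2 = 1 → w j = 0 :=
      key c hc w (fun k hk => hw' (2 * k) (by omega))
    have hz : ∀ k : ℕ, 2 * k + 1 < N + 2 → ∑ j, (A ^ (2 * k)) 1 j * (A *ᵥ w) j = 0 := by
      intro k hk
      have hstep : ∑ j, (A ^ (2 * k)) 1 j * (A *ᵥ w) j = ∑ j, (A ^ (2 * k + 1)) 1 j * w j := by
        have e1 : ∑ j, (A ^ (2 * k)) 1 j * (A *ᵥ w) j = (A ^ (2 * k)) 1 ⬝ᵥ (A *ᵥ w) := rfl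
        have e2 : ∑ j, (A ^ (2 * k + 1)) 1 j * w j = (A ^ (2 * k + 1)) 1 ⬝ᵥ w := rfl
        rw [e1, e2, Matrix.dotProduct_mulVec, pow_succ, Matrix.mul_apply_eq_vecMul]
      rw [hstep]
      exact hw' (2 * k + 1) hk
    have hoddz : ∀ j : Fin (N + 2), (j : ℕ) % 2 = 1 → (A *ᵥ w) j = 0 :=
      key c hc _ hz
    have hev : ∀ d : ℕ, ∀ j : Fin (N + 2), (j : ℕ) % 2 = 0 → N + 2 ≤ (j : ℕ) + d → w j = 0 := by
      intro d
      induction d with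
      | zero => intro j _ hd; exact absurd j.isLt (by omega)
      | succ d ihd =>
        intro j hj hd
        have hj1 : (j : ℕ) + 1 < N + 2 := by omega
        have hz0 := hoddz ⟨(j : ℕ) + 1, hj1⟩ (by simp; omega)
        rw [show ((A *ᵥ w) ⟨(j : ℕ) + 1, hj1⟩) = ∑ k, A ⟨(j : ℕ) + 1, hj1⟩ k * w k from rfl]
          at hz0
        rw [Finset.sum_eq_single j] at hz0
        · rw [hA, triA_right c (by simp)] at hz0
          have hcj : -(c (j : ℕ)) ≠ 0 := neg_ne_zero.mpr (hc (j : ℕ) (by omega))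
          exact (mul_eq_zero.mp hz0).resolve_left hcj
        · intro k _ hkj
          rcases eq_or_ne (A ⟨(j : ℕ) + 1, hj1⟩ k) 0 with h0 | h0
          · rw [h0, zero_mul]
          · rcases triA_ne_zero h0 with hcase | hcase
            · simp only [Fin.val_mk] at hcase
              rw [ihd k (by omega) (by omega), mul_zero]
            · simp only [Fin.val_mk] at hcase
              exact absurd (Fin.ext (by omega : (k : ℕ) = (j : ℕ))) hkj
        · intro hmem; exact absurd (Finset.mem_univ _) hmem
    funext j
    simp only [Pi.zero_apply]
    rcases Nat.even_or_odd (j : ℕ) with he | ho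
    · exact hev (N + 2) j (Nat.even_iff.mp he) (by omega)
    · exact hodd j (Nat.odd_iff.mp ho)
  have hdet : M.det ≠ 0 := by
    intro h0
    obtain ⟨v, hv, hv0⟩ := (Matrix.exists_mulVec_eq_zero_iff).mpr h0
    exact hv (hker v hv0)
  have hunit : IsUnit M := (Matrix.isUnit_iff_isUnit_det M).mpr (isUnit_iff_ne_zero.mpr hdet)
  rw [Matrix.rank_of_isUnit M hunit]
  simp
end

section
/- Let Ã be the (n-1)×(n-1) matrix obtained by deleting the first row and column of the n×n tridiagonal antisymmetric matrix A(h) (so Ã = A((h_2,...,h_{n-1}))), and suppose a block-diagonal analysis gives: S̃ invertible with S̃ Ã = Ã' S̃, E = h_1 e_1 and E' = h'_1 e_1 with E^T = E'^T S̃ and S̃ E = E', and h_1, h'_1 ≠ 0. Then |h_1| = |h'_1|, |S̃_{11}| = 1, the first row and first column of S̃ vanish off the (1,1) entry, and the intertwining relation reduces to the same problem in dimension n-2. -/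
open Matrix

lemma triA_succ_succ (m : ℕ) (c : ℕ → ℝ) (i j : Fin m) :
    triA (m + 1) c i.succ j.succ = triA m (fun k => c (k + 1)) i j := by
  have e1 : ((i : ℕ) + 1 + 1 = (j : ℕ) + 1) ↔ ((i : ℕ) + 1 = (j : ℕ)) := by omega
  have e2 : ((j : ℕ) + 1 + 1 = (i : ℕ) + 1) ↔ ((j : ℕ) + 1 = (i : ℕ)) := by omega
  simp [triA, Fin.val_succ, e1, e2]

/-- Inductive step of the similarity-transformation argument: `Ã = triA (m+1) c`
is the matrix obtained from the n×n tridiagonal antisymmetric matrix by deleting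
the first row and column, `E = h₁ e₁`, `E' = h₁' e₁`, and `S̃` intertwines. -/
theorem stmt_7 (m : ℕ) (c c' : ℕ → ℝ)
    (hc : ∀ i, i < m → c i ≠ 0) (hc' : ∀ i, i < m → c' i ≠ 0)
    (h1 h1' : ℝ) (hh1 : h1 ≠ 0) (hh1' : h1' ≠ 0)
    (St : Matrix (Fin (m + 1)) (Fin (m + 1)) ℝ) (hSt : IsUnit St)
    (hE1 : (Pi.single (0 : Fin (m + 1)) h1 : Fin (m + 1) → ℝ)
            = Matrix.vecMul (Pi.single 0 h1') St)
    (hE2 : St.mulVec (Pi.single 0 h1) = Pi.single 0 h1')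
    (hAS : St * triA (m + 1) c = triA (m + 1) c' * St) :
    |h1| = |h1'|
    ∧ |St 0 0| = 1
    ∧ (∀ j : Fin (m + 1), j ≠ 0 → St 0 j = 0 ∧ St j 0 = 0)
    ∧ ∃ s : ℝ, (s = 1 ∨ s = -1) ∧
        (s • St.submatrix Fin.succ Fin.succ) * triA m (fun k => c (k + 1))
          = triA m (fun k => c' (k + 1)) * (s • St.submatrix Fin.succ Fin.succ) := by
  have hcol : ∀ j : Fin (m + 1), St j 0 * h1 = (Pi.single (0 : Fin (m+1)) h1' : Fin (m+1) → ℝ) j := by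
    intro j
    have := congrFun hE2 j
    rwa [Matrix.mulVec_single] at this
  have hrow : ∀ j : Fin (m + 1), (Pi.single (0 : Fin (m+1)) h1 : Fin (m+1) → ℝ) j = h1' * St 0 j := by
    intro j
    have := congrFun hE1 j
    rwa [Matrix.single_vecMul] at this
  have hcolz : ∀ j : Fin (m + 1), j ≠ 0 → St j 0 = 0 := by
    intro j hj
    have := hcol j
    rw [Pi.single_apply, if_neg hj] at this
    exact (mul_eq_zero.mp this).resolve_right hh1
  have hrowz : ∀ j : Fin (m + 1), j ≠ 0 → St 0 j = 0 := by
    intro j hj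
    have := hrow j
    rw [Pi.single_apply, if_neg hj] at this
    exact (mul_eq_zero.mp this.symm).resolve_left hh1'
  have e1 : St 0 0 * h1 = h1' := by simpa using hcol 0
  have e2 : h1' * St 0 0 = h1 := by simpa using (hrow 0).symm
  have hsq : St 0 0 * St 0 0 = 1 := by
    have h : St 0 0 * St 0 0 * h1 = 1 * h1 := by
      rw [mul_assoc, e1, one_mul, mul_comm, e2]
    exact mul_right_cancel₀ hh1 h
  have hpm : St 0 0 = 1 ∨ St 0 0 = -1 := mul_self_eq_one_iff.mp hsq
  refine ⟨?_, ?_, fun j hj => ⟨hrowz j hj, hcolz j hj⟩, 1, Or.inl rfl, ?_⟩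
  · rw [← e1, abs_mul]
    rcases hpm with h | h <;> simp [h]
  · rcases hpm with h | h <;> simp [h]
  · simp only [one_smul]
    ext i j
    have := congrFun (congrFun hAS i.succ) j.succ
    rw [Matrix.mul_apply, Matrix.mul_apply, Fin.sum_univ_succ, Fin.sum_univ_succ,
      hcolz i.succ (Fin.succ_ne_zero i), hrowz j.succ (Fin.succ_ne_zero j)] at this
    simp only [zero_mul, mul_zero, zero_add] at this
    rw [Matrix.mul_apply, Matrix.mul_apply]
    calc ∑ k, St.submatrix Fin.succ Fin.succ i k * triA m (fun t => c (t+1)) k j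
        = ∑ k : Fin m, St i.succ k.succ * triA (m+1) c k.succ j.succ := by
          apply Finset.sum_congr rfl; intro k _
          rw [Matrix.submatrix_apply, triA_succ_succ]
      _ = ∑ k : Fin m, triA (m+1) c' i.succ k.succ * St k.succ j.succ := this
      _ = ∑ k, triA m (fun t => c' (t+1)) i k * St.submatrix Fin.succ Fin.succ k j := by
          apply Finset.sum_congr rfl; intro k _
          rw [Matrix.submatrix_apply, triA_succ_succ]
end

section
/- Let N be odd, A the (N+2)×(N+2) tridiagonal antisymmetric matrix with superdiagonal (h_α, h_β, h_1, ..., h_{N-1}), C = e_2^T, and P the (N+2)×(N+2) matrix whose first N+1 rows are C, CA, ..., CA^N and whose last row is (0,...,0,1). Write P = [[P̄, p],[0,1]]. Then p = (0, ..., 0, h_β ∏_{i=1}^{N-1} h_i)^T. -/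
open Matrix

lemma triA_apply (n : ℕ) (c : ℕ → ℝ) (i j : Fin n) :
    triA n c i j = if (i : ℕ) + 1 = (j : ℕ) then c i
      else if (j : ℕ) + 1 = (i : ℕ) then -(c j) else 0 := rfl

lemma aux_zero (m : ℕ) (c : ℕ → ℝ) :
    ∀ (k : ℕ) (j : Fin (m + 2)), k + 1 < (j : ℕ) →
      Matrix.vecMul (Pi.single 1 1) ((triA (m + 2) c) ^ k) j = 0 := by
  intro k
  induction k with
  | zero =>
    intro j hj
    rw [pow_zero, Matrix.vecMul_one]
    apply Pi.single_eq_of_ne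
    intro hjj
    rw [hjj] at hj
    simp [Fin.val_one] at hj
  | succ k ih =>
    intro j hj
    rw [pow_succ, ← Matrix.vecMul_vecMul]
    set w := Matrix.vecMul (Pi.single 1 1) ((triA (m + 2) c) ^ k) with hw
    show ∑ i, w i * triA (m + 2) c i j = 0
    apply Finset.sum_eq_zero
    intro i _
    rw [triA_apply]
    by_cases h1 : (i : ℕ) + 1 = (j : ℕ)
    · rw [if_pos h1, ih i (by omega), zero_mul]
    · rw [if_neg h1]
      by_cases h2 : (j : ℕ) + 1 = (i : ℕ)
      · rw [if_pos h2, ih i (by omega), zero_mul]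
      · rw [if_neg h2, mul_zero]

lemma aux_prod (m : ℕ) (c : ℕ → ℝ) :
    ∀ (k : ℕ) (hk : k + 1 < m + 2),
      Matrix.vecMul (Pi.single 1 1) ((triA (m + 2) c) ^ k) ⟨k + 1, hk⟩
        = ∏ i ∈ Finset.Icc 1 k, c i := by
  intro k
  induction k with
  | zero =>
    intro hk
    rw [pow_zero, Matrix.vecMul_one]
    have : (⟨0 + 1, hk⟩ : Fin (m + 2)) = 1 := by
      ext; simp [Fin.val_one]
    rw [this, Pi.single_eq_same]
    simp
  | succ k ih =>
    intro hk
    rw [pow_succ, ← Matrix.vecMul_vecMul]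
    set w := Matrix.vecMul (Pi.single 1 1) ((triA (m + 2) c) ^ k) with hw
    show ∑ i, w i * triA (m + 2) c i ⟨k + 1 + 1, hk⟩ = _
    rw [Finset.sum_eq_single (⟨k + 1, by omega⟩ : Fin (m + 2))]
    · rw [ih (by omega), triA_apply, if_pos rfl]
      rw [Finset.prod_Icc_succ_top (by omega : 1 ≤ k + 1)]
    · intro i _ hne
      rw [triA_apply]
      by_cases h1 : (i : ℕ) + 1 = ((⟨k + 1 + 1, hk⟩ : Fin (m + 2)) : ℕ)
      · exact absurd (Fin.ext (show (i : ℕ) = k + 1 by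
          have : (i : ℕ) + 1 = k + 1 + 1 := h1; omega)) hne
      · rw [if_neg h1]
        by_cases h2 : ((⟨k + 1 + 1, hk⟩ : Fin (m + 2)) : ℕ) + 1 = (i : ℕ)
        · have h2' : k + 1 + 1 + 1 = (i : ℕ) := h2
          rw [if_pos h2, hw]
          rw [aux_zero m c k i (by omega), zero_mul]
        · rw [if_neg h2, mul_zero]
    · intro habs
      exact absurd (Finset.mem_univ _) habs

/-- The last column of the first N+1 rows `C, CA, ..., CA^N` of the matrix `P`
is `(0, ..., 0, h_β ∏_{i=1}^{N-1} h_i)ᵀ`. -/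
theorem stmt_13 (N : ℕ) (hN : Odd N) (hα hβ : ℝ) (h : ℕ → ℝ) (k : Fin (N + 1)) :
    Matrix.vecMul (Pi.single 1 1) ((triA (N + 2) (chain hα hβ h)) ^ (k : ℕ))
        ⟨N + 1, by omega⟩
      = if (k : ℕ) = N then hβ * ∏ i ∈ Finset.Icc 1 (N - 1), h i else 0 := by
  have hN1 : 1 ≤ N := hN.pos
  by_cases hk : (k : ℕ) = N
  · rw [if_pos hk]
    have heq : (⟨N + 1, by omega⟩ : Fin (N + 2)) = ⟨(k : ℕ) + 1, by omega⟩ := by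
      ext; show N + 1 = (k : ℕ) + 1; omega
    rw [heq, aux_prod N (chain hα hβ h) (k : ℕ) (by omega), hk]
    -- split off the first factor
    rw [← Finset.Ico_add_one_right_eq_Icc, Finset.prod_eq_prod_Ico_succ_bot (by omega : 1 < N + 1)]
    have hc1 : chain hα hβ h 1 = hβ := by simp [chain]
    rw [hc1]
    congr 1
    rw [← Finset.Ico_add_one_right_eq_Icc]
    rw [Finset.prod_Ico_eq_prod_range, Finset.prod_Ico_eq_prod_range]
    have hlen : N + 1 - (1 + 1) = (N - 1) + 1 - 1 := by omega
    rw [hlen]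
    apply Finset.prod_congr rfl
    intro i _
    simp only [chain]
    rw [if_neg (by omega), if_neg (by omega)]
    congr 1
    omega
  · rw [if_neg hk]
    exact aux_zero N (chain hα hβ h) (k : ℕ) ⟨N + 1, by omega⟩
      (show (k : ℕ) + 1 < N + 1 by omega)
end

section
/- Let A be the 4×4 real matrix [[0,0,0,-4(a^2+b^2)^2],[1,0,0,0],[0,1,0,-5a^2-5b^2],[0,0,1,0]], B=(1,0,0,0)^T, C=(0,-a,0,a^3+4ab^2) with a ≠ 0, b ≠ 0. If (a', b') with a' ≠ 0, b' ≠ 0 yields the same matrices up to an invertible S with SA(a,b)=A(a',b')S, SB=B, C(a,b)=C(a',b')S, then S = I, a = a', and |b| = |b'|. -/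
open Matrix

/-- Minimal-realization `A` matrix of the 3-spin two-qubit-sensor system,
with `a = h_α`, `b = h_β`. -/
def Amin (a b : ℝ) : Matrix (Fin 4) (Fin 4) ℝ :=
  !![0, 0, 0, -4 * (a ^ 2 + b ^ 2) ^ 2;
     1, 0, 0, 0;
     0, 1, 0, -5 * a ^ 2 - 5 * b ^ 2;
     0, 0, 1, 0]

/-- Minimal-realization `C` matrix. -/
def Cmin (a b : ℝ) : Matrix (Fin 1) (Fin 4) ℝ :=
  !![0, -a, 0, a ^ 3 + 4 * a * b ^ 2]

theorem stmt_19 (a b a' b' : ℝ) (ha : a ≠ 0) (hb : b ≠ 0) (ha' : a' ≠ 0) (hb' : b' ≠ 0)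
    (S : Matrix (Fin 4) (Fin 4) ℝ) (hS : IsUnit S)
    (h1 : S * Amin a b = Amin a' b' * S)
    (h2 : S * (!![1; 0; 0; 0] : Matrix (Fin 4) (Fin 1) ℝ) = !![1; 0; 0; 0])
    (h3 : Cmin a b = Cmin a' b' * S) :
    S = 1 ∧ a = a' ∧ |b| = |b'| := by
  have c0 : ∀ i, S i 0 = (1 : Matrix (Fin 4) (Fin 4) ℝ) i 0 := by
    intro i
    have := congrFun (congrFun h2 i) 0
    fin_cases i <;>
      simpa [Matrix.mul_apply, Fin.sum_univ_four, Matrix.one_apply,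
        Matrix.vecHead, Matrix.vecTail] using this
  have c1 : ∀ i, S i 1 = (1 : Matrix (Fin 4) (Fin 4) ℝ) i 1 := by
    intro i
    have := congrFun (congrFun h1 i) 0
    fin_cases i <;>
      simpa [Amin, Matrix.mul_apply, Fin.sum_univ_four, Matrix.one_apply,
        Matrix.vecHead, Matrix.vecTail, c0 0, c0 1, c0 2, c0 3] using this
  have c2 : ∀ i, S i 2 = (1 : Matrix (Fin 4) (Fin 4) ℝ) i 2 := by
    intro i
    have := congrFun (congrFun h1 i) 1
    fin_cases i <;>
      simpa [Amin, Matrix.mul_apply, Fin.sum_univ_four, Matrix.one_apply,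
        Matrix.vecHead, Matrix.vecTail,
        c0 0, c0 1, c0 2, c0 3, c1 0, c1 1, c1 2, c1 3] using this
  have c3 : ∀ i, S i 3 = (1 : Matrix (Fin 4) (Fin 4) ℝ) i 3 := by
    intro i
    have := congrFun (congrFun h1 i) 2
    fin_cases i <;>
      simpa [Amin, Matrix.mul_apply, Fin.sum_univ_four, Matrix.one_apply,
        Matrix.vecHead, Matrix.vecTail,
        c0 0, c0 1, c0 2, c0 3, c1 0, c1 1, c1 2, c1 3, c2 0, c2 1, c2 2, c2 3] using this
  have hSI : S = 1 := by
    ext i j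
    fin_cases j
    · exact c0 i
    · exact c1 i
    · exact c2 i
    · exact c3 i
  subst hSI
  simp only [mul_one, one_mul] at h1 h3
  have ea : a = a' := by
    have := congrFun (congrFun h3 0) 1
    simp [Cmin] at this
    linarith
  have e1 : -5 * a ^ 2 - 5 * b ^ 2 = -5 * a' ^ 2 - 5 * b' ^ 2 := by
    have := congrFun (congrFun h1 2) 3
    simpa [Amin] using this
  refine ⟨rfl, ea, ?_⟩
  have hb2 : b ^ 2 = b' ^ 2 := by rw [ea] at e1; linarith
  have hz : (b - b') * (b + b') = 0 := by
    rw [show (b - b') * (b + b') = b ^ 2 - b' ^ 2 from by ring, hb2, sub_self]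
  rcases mul_eq_zero.mp hz with h | h
  · rw [abs_eq_abs]; left; linarith
  · rw [abs_eq_abs]; right; linarith
end
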